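/- Let A > 0 be real, s real, t ≤ -(1+s²)/2. Then for the function ξ(u,v) = u + v/(u + A) + γ where γ = (A)/(2(1 + A² + √(1+A⁴))), the real part of ξ(is, t) is nonpositive, i.e., Re(is + t/(is + A) + γ) ≤ 0. -/
import Mathlib


open Complex in
theorem xi_re_nonpos (A : ℝ) (hA : 0 < A) (s t : ℝ) (ht : t ≤ -(1 + s^2)/2)
    (gamma : ℝ) (hg : gamma = A / (2 * (1 + A^2 + Real.sqrt (1 + A^4)))) :
    ((Complex.I * (s : ℂ) + (t : ℂ) / (Complex.I * (s : ℂ) + (A : ℂ)) + (gamma : ℂ)).re) ≤ 0 := by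
  have hden : (0:ℝ) < A^2 + s^2 := by positivity
  have hre : ((Complex.I * (s : ℂ) + (t : ℂ) / (Complex.I * (s : ℂ) + (A : ℂ)) + (gamma : ℂ)).re)
      = t * A / (A^2 + s^2) + gamma := by
    simp [Complex.div_re, Complex.normSq_apply]
    ring_nf
  rw [hre]
  have hS : (0:ℝ) ≤ Real.sqrt (1 + A^4) := Real.sqrt_nonneg _
  have hpos : (0:ℝ) < 2 * (1 + A^2 + Real.sqrt (1 + A^4)) := by positivity
  have h1 : t * A / (A^2 + s^2) ≤ -(A * (1 + s^2)) / (2 * (A^2 + s^2)) := by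
    rw [div_le_div_iff₀ hden (by positivity)]
    nlinarith [mul_pos hA hden]
  have h2 : gamma ≤ A * (1 + s^2) / (2 * (A^2 + s^2)) := by
    rw [hg, div_le_div_iff₀ hpos (by positivity)]
    nlinarith [mul_nonneg (mul_nonneg hA.le hS) (sq_nonneg s), mul_nonneg hA.le hS,
      mul_nonneg (mul_nonneg hA.le (sq_nonneg s)) (sq_nonneg A)]
  have : -(A * (1 + s^2)) / (2 * (A^2 + s^2)) + A * (1 + s^2) / (2 * (A^2 + s^2)) = 0 := by
    ring
  linarith
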